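/- Let L be a finitely generated field extension of a field k, and let R₁, R₂ be finitely generated k-subalgebras of L that are integral domains whose fraction fields both equal L. Then there exist nonzero elements r₁ ∈ R₁ and r₂ ∈ R₂ such that the localizations R₁[1/r₁] and R₂[1/r₂] are equal as subrings of L. -/

import Mathlib

/-- The subalgebra `B[1/f]` of `L`, described as elements `x` with `f^n x ∈ B`. -/
def locSub (k L : Type) [Field k] [Field L] [Algebra k L]
    (B : Subalgebra k L) (f : L) (hf : f ∈ B) : Subalgebra k L where
  carrier := {x | ∃ n : ℕ, f ^ n * x ∈ B}
  mul_mem' := by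
    rintro x y ⟨n, hx⟩ ⟨m, hy⟩
    refine ⟨n + m, ?_⟩
    rw [pow_add, show f ^ n * f ^ m * (x * y) = (f ^ n * x) * (f ^ m * y) by ring]
    exact mul_mem hx hy
  add_mem' := by
    rintro x y ⟨n, hx⟩ ⟨m, hy⟩
    refine ⟨n + m, ?_⟩
    rw [pow_add, show f ^ n * f ^ m * (x + y) = f ^ m * (f ^ n * x) + f ^ n * (f ^ m * y) by ring]
    exact add_mem (mul_mem (pow_mem hf m) hx) (mul_mem (pow_mem hf n) hy)
  one_mem' := ⟨0, by simpa using one_mem B⟩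
  algebraMap_mem' := fun r => ⟨0, by simpa using B.algebraMap_mem r⟩

lemma mem_locSub {k L : Type} [Field k] [Field L] [Algebra k L]
    {B : Subalgebra k L} {f : L} (hf : f ∈ B) {x : L} :
    x ∈ locSub k L B f hf ↔ ∃ n : ℕ, f ^ n * x ∈ B := by
  constructor <;> exact fun h => h

lemma adjoin_insert_inv_eq (k L : Type) [Field k] [Field L] [Algebra k L]
    (B : Subalgebra k L) (f : L) (hf : f ∈ B) (hf0 : f ≠ 0) :
    Algebra.adjoin k (insert f⁻¹ (B : Set L)) = locSub k L B f hf := by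
  apply le_antisymm
  · apply Algebra.adjoin_le
    rintro x hx
    rcases Set.mem_insert_iff.mp hx with rfl | hx
    · exact ⟨1, by simp [mul_inv_cancel₀ hf0, one_mem]⟩
    · exact ⟨0, by simpa using hx⟩
  · rintro x ⟨n, hn⟩
    have h1 : f⁻¹ ∈ Algebra.adjoin k (insert f⁻¹ (B : Set L)) :=
      Algebra.subset_adjoin (Set.mem_insert _ _)
    have h2 : f ^ n * x ∈ Algebra.adjoin k (insert f⁻¹ (B : Set L)) :=
      Algebra.subset_adjoin (Set.mem_insert_of_mem _ hn)
    have hx : x = (f⁻¹) ^ n * (f ^ n * x) := by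
      rw [← mul_assoc, ← mul_pow, inv_mul_cancel₀ hf0, one_pow, one_mul]
    rw [hx]
    exact mul_mem (pow_mem h1 n) h2

/-- Common denominator for all of a f.g. subalgebra `R` inside `Frac B = L`. -/
lemma exists_denom (k L : Type) [Field k] [Field L] [Algebra k L]
    (B R : Subalgebra k L) (hR : R.FG)
    (hfB : ∀ x : L, ∃ a b : L, a ∈ B ∧ b ∈ B ∧ b ≠ 0 ∧ x * b = a) :
    ∃ f : L, f ∈ B ∧ f ≠ 0 ∧ ∀ x ∈ R, ∃ N : ℕ, f ^ N * x ∈ B := by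
  obtain ⟨s, hs⟩ := hR
  have hden : ∀ x : L, ∃ b : L, b ∈ B ∧ b ≠ 0 ∧ b * x ∈ B := by
    intro x
    obtain ⟨a, b, ha, hb, hb0, hx⟩ := hfB x
    exact ⟨b, hb, hb0, by rw [mul_comm, hx]; exact ha⟩
  choose bf hbf hbf0 hbfx using hden
  refine ⟨∏ x ∈ s, bf x, prod_mem fun x _ => hbf x, Finset.prod_ne_zero_iff.mpr fun x _ => hbf0 x, ?_⟩
  have hfB' : (∏ x ∈ s, bf x) ∈ B := prod_mem fun x _ => hbf x
  intro x hx
  have : R ≤ locSub k L B _ hfB' := by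
    rw [← hs]
    apply Algebra.adjoin_le
    intro y hy
    classical
    refine ⟨1, ?_⟩
    rw [pow_one, ← Finset.mul_prod_erase s bf (by exact_mod_cast hy),
      show bf y * (∏ z ∈ s.erase y, bf z) * y = (∏ z ∈ s.erase y, bf z) * (bf y * y) by ring]
    exact mul_mem (prod_mem fun z hz => hbf z) (hbfx y)
  exact this hx

theorem swan_lemma_localizations_agree (k L : Type) [Field k] [Field L]
    [Algebra k L] (hLfg : (⊤ : IntermediateField k L).FG)
    (R₁ R₂ : Subalgebra k L) (h₁ : R₁.FG) (h₂ : R₂.FG)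
    (hf₁ : ∀ x : L, ∃ a b : L, a ∈ R₁ ∧ b ∈ R₁ ∧ b ≠ 0 ∧ x * b = a)
    (hf₂ : ∀ x : L, ∃ a b : L, a ∈ R₂ ∧ b ∈ R₂ ∧ b ≠ 0 ∧ x * b = a) :
    ∃ r₁ r₂ : L, r₁ ∈ R₁ ∧ r₂ ∈ R₂ ∧ r₁ ≠ 0 ∧ r₂ ≠ 0 ∧
      Algebra.adjoin k (insert r₁⁻¹ (R₁ : Set L)) =
        Algebra.adjoin k (insert r₂⁻¹ (R₂ : Set L)) := by
  -- f ∈ R₂ is a common denominator embedding R₁ into R₂[1/f]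
  obtain ⟨f, hfR₂, hf0, hf⟩ := exists_denom k L R₂ R₁ h₁ hf₂
  -- g ∈ R₁ is a common denominator embedding R₂ into R₁[1/g]
  obtain ⟨g, hgR₁, hg0, hg⟩ := exists_denom k L R₁ R₂ h₂ hf₁
  obtain ⟨n, ha⟩ := hg f hfR₂
  obtain ⟨m, hb⟩ := hf g hgR₁
  set a : L := g ^ n * f with ha_def
  set b : L := f ^ m * g with hb_def
  have ha0 : a ≠ 0 := mul_ne_zero (pow_ne_zero _ hg0) hf0
  have hb0 : b ≠ 0 := mul_ne_zero (pow_ne_zero _ hf0) hg0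
  have hr₁R : g * a ∈ R₁ := mul_mem hgR₁ ha
  have hr₂R : f * b ∈ R₂ := mul_mem hfR₂ hb
  have hr₁0 : g * a ≠ 0 := mul_ne_zero hg0 ha0
  have hr₂0 : f * b ≠ 0 := mul_ne_zero hf0 hb0
  refine ⟨g * a, f * b, hr₁R, hr₂R, hr₁0, hr₂0, ?_⟩
  rw [adjoin_insert_inv_eq k L R₁ _ hr₁R hr₁0, adjoin_insert_inv_eq k L R₂ _ hr₂R hr₂0]
  apply le_antisymm
  · -- R₁[1/(ga)] ≤ R₂[1/(fb)]
    rintro x ⟨N, hN⟩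
    -- (g*a)^N * x ∈ R₁, so ∃ P, f^P * ((g*a)^N * x) ∈ R₂; and (g*a)⁻¹-powers handled below
    -- Instead: x = (g*a)⁻¹^N * ((g*a)^N*x). Show (g*a)⁻¹ ∈ locSub R₂ (f*b) and R₁ ⊆ locSub R₂ (f*b)
    have hR₁le : ∀ y ∈ R₁, y ∈ locSub k L R₂ (f * b) hr₂R := by
      intro y hy
      obtain ⟨P, hP⟩ := hf y hy
      refine ⟨P, ?_⟩
      rw [mul_pow, show f ^ P * b ^ P * y = b ^ P * (f ^ P * y) by ring]
      exact mul_mem (pow_mem hb P) hP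
    have hinv : (g * a)⁻¹ ∈ locSub k L R₂ (f * b) hr₂R := by
      refine ⟨n + 2, ?_⟩
      have key : (f * b) ^ (n + 2) * (g * a)⁻¹ = f ^ (n + 1 + m * (n + 1)) * b := by
        rw [mul_inv_eq_iff_eq_mul₀ hr₁0, ha_def, hb_def]
        ring
      rw [key]
      exact mul_mem (pow_mem hfR₂ _) hb
    have hx : x = ((g * a)⁻¹) ^ N * ((g * a) ^ N * x) := by
      rw [← mul_assoc, ← mul_pow, inv_mul_cancel₀ hr₁0, one_pow, one_mul]
    rw [hx]
    exact mul_mem (pow_mem hinv N) (hR₁le _ hN)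
  · rintro x ⟨N, hN⟩
    have hR₂le : ∀ y ∈ R₂, y ∈ locSub k L R₁ (g * a) hr₁R := by
      intro y hy
      obtain ⟨P, hP⟩ := hg y hy
      refine ⟨P, ?_⟩
      rw [mul_pow, show g ^ P * a ^ P * y = a ^ P * (g ^ P * y) by ring]
      exact mul_mem (pow_mem ha P) hP
    have hinv : (f * b)⁻¹ ∈ locSub k L R₁ (g * a) hr₁R := by
      refine ⟨m + 2, ?_⟩
      have key : (g * a) ^ (m + 2) * (f * b)⁻¹ = g ^ (m + 1 + n * (m + 1)) * a := by
        rw [mul_inv_eq_iff_eq_mul₀ hr₂0, ha_def, hb_def]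
        ring
      rw [key]
      exact mul_mem (pow_mem hgR₁ _) ha
    have hx : x = ((f * b)⁻¹) ^ N * ((f * b) ^ N * x) := by
      rw [← mul_assoc, ← mul_pow, inv_mul_cancel₀ hr₂0, one_pow, one_mul]
    rw [hx]
    exact mul_mem (pow_mem hinv N) (hR₂le _ hN)
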